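/- Suppose that the set X achieving the minimum β^M = min{b_{(H,w)}(X) − p(X) : X ⊆ V, e ∩ X ≠ ∅, f ∩ X ≠ ∅} satisfies β^M > 0, under the following hypotheses: p : 2^V → ℤ is skew-supermodular, (H = (V, E), w : E → ℤ₊) is a hypergraph with b_{(H,w)}(Z) ≥ p(Z) for all Z, every hyperedge is contained in some (p, H, w)-tight set, b_{(H,w)}({u}) ≠ 0 for all u ∈ V, and e, f ∈ E are hyperedges whose maximal (p, H, w)-tight sets are distinct. -/
import Mathlib

/-- Coverage function of a weighted hypergraph. -/
def coverage {V : Type*} [DecidableEq V] (E : Finset (Finset V)) (w : Finset V → ℕ)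
    (X : Finset V) : ℤ :=
  ∑ e ∈ E.filter (fun e => (e ∩ X).Nonempty), (w e : ℤ)

/-- Skew-supermodularity. -/
def SkewSupermodular {V : Type*} [DecidableEq V] (p : Finset V → ℤ) : Prop :=
  ∀ X Y : Finset V, p X + p Y ≤ p (X ∩ Y) + p (X ∪ Y) ∨
    p X + p Y ≤ p (X \ Y) + p (Y \ X)

section Aux
variable {V : Type*} [DecidableEq V] (E : Finset (Finset V)) (w : Finset V → ℕ)

lemma coverage_eq (X : Finset V) :
    coverage E w X = ∑ e ∈ E, (if (e ∩ X).Nonempty then (w e : ℤ) else 0) := by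
  rw [coverage, Finset.sum_filter]

lemma cov_submod (X Y : Finset V) :
    coverage E w (X ∩ Y) + coverage E w (X ∪ Y) ≤ coverage E w X + coverage E w Y := by
  simp only [coverage_eq, ← Finset.sum_add_distrib]
  apply Finset.sum_le_sum
  intro g _
  have hnn : (0:ℤ) ≤ (w g : ℤ) := Int.ofNat_nonneg _
  have h1 : (g ∩ (X ∩ Y)).Nonempty → (g ∩ X).Nonempty ∧ (g ∩ Y).Nonempty := by
    rintro ⟨a, ha⟩
    simp only [Finset.mem_inter] at ha
    exact ⟨⟨a, Finset.mem_inter.2 ⟨ha.1, ha.2.1⟩⟩, ⟨a, Finset.mem_inter.2 ⟨ha.1, ha.2.2⟩⟩⟩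
  have h2 : (g ∩ (X ∪ Y)).Nonempty → (g ∩ X).Nonempty ∨ (g ∩ Y).Nonempty := by
    rintro ⟨a, ha⟩
    simp only [Finset.mem_inter, Finset.mem_union] at ha
    rcases ha.2 with h | h
    · exact Or.inl ⟨a, Finset.mem_inter.2 ⟨ha.1, h⟩⟩
    · exact Or.inr ⟨a, Finset.mem_inter.2 ⟨ha.1, h⟩⟩
  by_cases c1 : (g ∩ (X ∩ Y)).Nonempty
  · obtain ⟨cx, cy⟩ := h1 c1
    by_cases c2 : (g ∩ (X ∪ Y)).Nonempty <;> simp [c1, c2, cx, cy]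
  · by_cases c2 : (g ∩ (X ∪ Y)).Nonempty
    · rcases h2 c2 with h | h <;> simp [c1, c2, h] <;> positivity
    · simp [c1, c2]
      positivity

lemma cov_diff (X Y : Finset V) (g : Finset V) (hg : g ∈ E)
    (hgX : (g ∩ X).Nonempty) (hgY : (g ∩ Y).Nonempty) (hgd : g ∩ (X \ Y) = ∅) :
    coverage E w (X \ Y) + coverage E w (Y \ X) + w g ≤ coverage E w X + coverage E w Y := by
  set F : Finset V → ℤ := fun a =>
    ((if (a ∩ X).Nonempty then (w a : ℤ) else 0) + (if (a ∩ Y).Nonempty then (w a : ℤ) else 0))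
    - ((if (a ∩ (X \ Y)).Nonempty then (w a : ℤ) else 0)
        + (if (a ∩ (Y \ X)).Nonempty then (w a : ℤ) else 0)) with hF
  have hnonneg : ∀ a ∈ E, 0 ≤ F a := by
    intro a _
    have hnn : (0:ℤ) ≤ (w a : ℤ) := Int.ofNat_nonneg _
    have hd1 : (a ∩ (X \ Y)).Nonempty → (a ∩ X).Nonempty := by
      rintro ⟨b, hb⟩
      simp only [Finset.mem_inter, Finset.mem_sdiff] at hb
      exact ⟨b, Finset.mem_inter.2 ⟨hb.1, hb.2.1⟩⟩
    have hd2 : (a ∩ (Y \ X)).Nonempty → (a ∩ Y).Nonempty := by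
      rintro ⟨b, hb⟩
      simp only [Finset.mem_inter, Finset.mem_sdiff] at hb
      exact ⟨b, Finset.mem_inter.2 ⟨hb.1, hb.2.1⟩⟩
    by_cases c1 : (a ∩ (X \ Y)).Nonempty <;> by_cases c2 : (a ∩ (Y \ X)).Nonempty <;>
      simp [hF, c1, c2, hd1, hd2] <;> first | positivity | simp_all
  have hkey : (w g : ℤ) ≤ F g := by
    have : ¬ (g ∩ (X \ Y)).Nonempty := by simp [hgd]
    by_cases c2 : (g ∩ (Y \ X)).Nonempty <;> simp [hF, hgX, hgY, this, c2]
  have hsum : F g ≤ ∑ a ∈ E, F a := Finset.single_le_sum hnonneg hg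
  have hexp : ∑ a ∈ E, F a =
      coverage E w X + coverage E w Y - (coverage E w (X \ Y) + coverage E w (Y \ X)) := by
    simp only [coverage_eq, hF, Finset.sum_sub_distrib, Finset.sum_add_distrib]
  linarith [hsum, hkey, hexp.le, hexp.ge]

end Aux

/-- If `e` and `f` are hyperedges whose maximal tight sets are distinct, then
`β^M = min { b(X) − p(X) : X intersects both e and f }` is positive, i.e. every
set intersecting both `e` and `f` satisfies `b(X) − p(X) > 0`. -/
theorem betaM_pos {V : Type*} [Fintype V] [DecidableEq V]
    (E : Finset (Finset V)) (w : Finset V → ℕ) (p : Finset V → ℤ)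
    (hw : ∀ e ∈ E, 0 < w e)
    (hp : SkewSupermodular p)
    (hcover : ∀ Z : Finset V, p Z ≤ coverage E w Z)
    (htight : ∀ e ∈ E, ∃ X : Finset V, e ⊆ X ∧ coverage E w X = p X)
    (hdeg : ∀ u : V, coverage E w {u} ≠ 0)
    (e f : Finset V) (he : e ∈ E) (hf : f ∈ E)
    (hdistinct : ∀ Me Mf : Finset V,
      (e ⊆ Me ∧ coverage E w Me = p Me ∧
        ∀ M' : Finset V, coverage E w M' = p M' → Me ⊆ M' → Me = M') →
      (f ⊆ Mf ∧ coverage E w Mf = p Mf ∧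
        ∀ M' : Finset V, coverage E w M' = p M' → Mf ⊆ M' → Mf = M') →
      Me ≠ Mf) :
    ∀ X : Finset V, (e ∩ X).Nonempty → (f ∩ X).Nonempty →
      0 < coverage E w X - p X := by
  -- construct maximal tight sets
  have hmax : ∀ g ∈ E, ∃ M : Finset V, g ⊆ M ∧ coverage E w M = p M ∧
      (∀ M' : Finset V, coverage E w M' = p M' → M ⊆ M' → M = M') ∧
      (∀ X : Finset V, coverage E w X = p X → (g ∩ X).Nonempty → X ⊆ M) := by
    intro g hg
    classical
    set S : Finset (Finset V) :=
      Finset.univ.filter (fun M => g ⊆ M ∧ coverage E w M = p M) with hS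
    have hSne : S.Nonempty := by
      obtain ⟨X, hX1, hX2⟩ := htight g hg
      exact ⟨X, by simp [hS, hX1, hX2]⟩
    obtain ⟨M, hMS, hMmax⟩ := S.exists_max_image (fun M => M.card) hSne
    simp only [hS, Finset.mem_filter, Finset.mem_univ, true_and] at hMS
    obtain ⟨hgM, hMt⟩ := hMS
    have hmaxM : ∀ M' : Finset V, coverage E w M' = p M' → M ⊆ M' → M = M' := by
      intro M' hM't hMM'
      have hM'S : M' ∈ S := by
        simp [hS, hM't, hgM.trans hMM']
      exact Finset.eq_of_subset_of_card_le hMM' (hMmax M' hM'S)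
    refine ⟨M, hgM, hMt, hmaxM, ?_⟩
    intro X hXt hgX
    have hge : (g ∩ M).Nonempty := by
      obtain ⟨a, ha⟩ := hgX
      exact ⟨a, Finset.mem_inter.2 ⟨(Finset.mem_inter.1 ha).1,
        hgM (Finset.mem_inter.1 ha).1⟩⟩
    rcases hp X M with hsup | hdif
    · -- union is tight
      have hsub := cov_submod E w X M
      have h1 := hcover (X ∩ M)
      have h2 := hcover (X ∪ M)
      have hUt : coverage E w (X ∪ M) = p (X ∪ M) := by linarith
      have := hmaxM (X ∪ M) hUt Finset.subset_union_right
      intro a ha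
      rw [this]
      exact Finset.mem_union_left _ ha
    · -- contradiction
      exfalso
      have hgd : g ∩ (X \ M) = ∅ := by
        apply Finset.eq_empty_of_forall_notMem
        intro a ha
        simp only [Finset.mem_inter, Finset.mem_sdiff] at ha
        exact ha.2.2 (hgM ha.1)
      have hd := cov_diff E w X M g hg hgX hge hgd
      have h1 := hcover (X \ M)
      have h2 := hcover (M \ X)
      have hwg : 0 < (w g : ℤ) := by exact_mod_cast hw g hg
      linarith
  obtain ⟨Me, heMe, hMet, hMemax, hMeabs⟩ := hmax e he
  obtain ⟨Mf, hfMf, hMft, hMfmax, hMfabs⟩ := hmax f hf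
  have hne : Me ≠ Mf := hdistinct Me Mf ⟨heMe, hMet, hMemax⟩ ⟨hfMf, hMft, hMfmax⟩
  intro X heX hfX
  by_contra hle
  push_neg at hle
  have hXt : coverage E w X = p X := le_antisymm (by linarith [hcover X]) (hcover X)
  have hXMe : X ⊆ Me := hMeabs X hXt heX
  have hXMf : X ⊆ Mf := hMfabs X hXt hfX
  -- uncross Me and Mf
  rcases hp Me Mf with hsup | hdif
  · have hsub := cov_submod E w Me Mf
    have h1 := hcover (Me ∩ Mf)
    have h2 := hcover (Me ∪ Mf)
    have hUt : coverage E w (Me ∪ Mf) = p (Me ∪ Mf) := by linarith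
    have he1 := hMemax (Me ∪ Mf) hUt Finset.subset_union_left
    have hf1 := hMfmax (Me ∪ Mf) hUt Finset.subset_union_right
    exact hne (he1.trans hf1.symm)
  · have heMf : (e ∩ Mf).Nonempty := by
      obtain ⟨a, ha⟩ := heX
      simp only [Finset.mem_inter] at ha
      exact ⟨a, Finset.mem_inter.2 ⟨ha.1, hXMf ha.2⟩⟩
    have heMe' : (e ∩ Me).Nonempty := by
      obtain ⟨a, ha⟩ := heX
      exact ⟨a, Finset.mem_inter.2 ⟨(Finset.mem_inter.1 ha).1,
        heMe (Finset.mem_inter.1 ha).1⟩⟩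
    have hgd : e ∩ (Mf \ Me) = ∅ := by
      apply Finset.eq_empty_of_forall_notMem
      intro a ha
      simp only [Finset.mem_inter, Finset.mem_sdiff] at ha
      exact ha.2.2 (heMe ha.1)
    have hd := cov_diff E w Mf Me e he heMf heMe' hgd
    have h1 := hcover (Me \ Mf)
    have h2 := hcover (Mf \ Me)
    have hwe : 0 < (w e : ℤ) := by exact_mod_cast hw e he
    linarith
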